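/- Let S be an abstract pure Hilbert system and let r be a rule over the formulas of S. Consider derivation trees of S + r (finite trees whose leaves are assumptions or axioms and whose inner nodes are applications of instances of rules of S + r), and the one-step mimicking rewrite relation on such trees: D → D' holds when D' is obtained from D by replacing one subtree ending in an application of an instance (⟨A₁,…,Aₙ⟩, A) of r (with immediate subderivations D₁,…,Dₙ of A₁,…,Aₙ) by a derivation tree of S with conclusion A whose assumptions are among {A₁,…,Aₙ}, grafting D₁,…,Dₙ onto those assumption leaves. Then this rewrite relation is strongly normalising (the reversed relation is well-founded), and if r is derivable in S then every normal form is a derivation tree containing no application of r, i.e. a derivation tree of S. -/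

import Mathlib

universe u

/-- An instance of a rule: a finite list of premise formulas and a conclusion formula. -/
abbrev Inst (F : Type u) := List F × F

/-- A rule over formulas `F`: a set of instances. -/
abbrev Rule (F : Type u) := Set (Inst F)

/-- An abstract pure Hilbert system over formulas `F`:
a set of axioms and a set of rules. -/
structure APHS (F : Type u) where
  axioms : Set F
  rules : Set (Rule F)

/-- The consequence relation `Γ ⊢_S A` of an APHS `S`, defined inductively. -/
inductive APHS.Deriv {F : Type u} (S : APHS F) : Set F → F → Prop
  | assum {Γ : Set F} {A : F} : A ∈ Γ → APHS.Deriv S Γ A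
  | ax {Γ : Set F} {A : F} : A ∈ S.axioms → APHS.Deriv S Γ A
  | rule {Γ : Set F} {r : Rule F} {i : Inst F} :
      r ∈ S.rules → i ∈ r → (∀ B ∈ i.1, APHS.Deriv S Γ B) →
      APHS.Deriv S Γ i.2

/-- A formula is a theorem of `S` if it is derivable without assumptions. -/
def APHS.Theorem {F : Type u} (S : APHS F) (A : F) : Prop :=
  S.Deriv ∅ A

/-- `S.add r` is the APHS `S + r` obtained from `S` by adding the rule `r`. -/
def APHS.add {F : Type u} (S : APHS F) (r : Rule F) : APHS F :=
  ⟨S.axioms, insert r S.rules⟩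

/-- A rule `r` is admissible in `S` if `S + r` has the same theorems as `S`. -/
def APHS.Admissible {F : Type u} (S : APHS F) (r : Rule F) : Prop :=
  ∀ A : F, (S.add r).Theorem A ↔ S.Theorem A

/-- A rule `r` is correct for `S` if for every instance of `r` whose premises are
all theorems of `S`, the conclusion is a theorem of `S`. -/
def APHS.Correct {F : Type u} (S : APHS F) (r : Rule F) : Prop :=
  ∀ i ∈ r, (∀ B ∈ i.1, S.Theorem B) → S.Theorem i.2

/-- A rule `r` is derivable in `S` if for every instance `(⟨A₁,…,Aₙ⟩, A)` of `r`
one has `{A₁,…,Aₙ} ⊢_S A`. -/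
def APHS.Derivable {F : Type u} (S : APHS F) (r : Rule F) : Prop :=
  ∀ i ∈ r, S.Deriv {B | B ∈ i.1} i.2

/-- Derivation trees for the system `S + r`: a leaf (an assumption, or an axiom
if its label is an axiom), or a node formed by an application of a rule instance,
with immediate subtrees.  The Boolean tag records whether the node is an
application of the added rule `r` (`true`) or of a rule of `S` (`false`). -/
inductive DTree (F : Type u) where
  | leaf (A : F) : DTree F
  | node (isR : Bool) (i : Inst F) (subs : List (DTree F)) : DTree F

/-- The conclusion of a derivation tree. -/
def DTree.concl {F : Type u} : DTree F → F
  | .leaf A => A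
  | .node _ i _ => i.2

/-- `ExtDeriv S r D` means `D` is a derivation tree of `S + r`:
nodes tagged `false` apply instances of rules of `S`, nodes tagged `true` apply
instances of the added rule `r`; premises of each applied instance are the
conclusions of the immediate subtrees. -/
inductive ExtDeriv {F : Type u} (S : APHS F) (r : Rule F) : DTree F → Prop
  | leaf (A : F) : ExtDeriv S r (.leaf A)
  | nodeS {q : Rule F} {i : Inst F} {subs : List (DTree F)} :
      q ∈ S.rules → i ∈ q → subs.map DTree.concl = i.1 →
      (∀ t ∈ subs, ExtDeriv S r t) →
      ExtDeriv S r (.node false i subs)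
  | nodeR {i : Inst F} {subs : List (DTree F)} :
      i ∈ r → subs.map DTree.concl = i.1 →
      (∀ t ∈ subs, ExtDeriv S r t) →
      ExtDeriv S r (.node true i subs)

/-- A derivation tree contains no application of the added rule `r`. -/
inductive RFree {F : Type u} : DTree F → Prop
  | leaf (A : F) : RFree (.leaf A)
  | node {i : Inst F} {subs : List (DTree F)} :
      (∀ t ∈ subs, RFree t) → RFree (.node false i subs)

/-- `DTree.IsAssm Ax A D` holds if `A` occurs as an assumption of `D`,
i.e. as the label of a leaf of `D` that is not an axiom from `Ax`. -/
inductive DTree.IsAssm {F : Type u} (Ax : Set F) : F → DTree F → Prop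
  | leaf {A : F} : A ∉ Ax → DTree.IsAssm Ax A (.leaf A)
  | node {A : F} {b : Bool} {i : Inst F} {subs : List (DTree F)} {t : DTree F} :
      t ∈ subs → DTree.IsAssm Ax A t → DTree.IsAssm Ax A (.node b i subs)

/-- `Graft Ax subs D E`: `E` is obtained from the tree `D` by grafting, at each
of its assumption leaves, some tree from `subs` whose conclusion is the label of
that leaf (axiom leaves may be kept). -/
inductive Graft {F : Type u} (Ax : Set F) (subs : List (DTree F)) :
    DTree F → DTree F → Prop
  | leafAx {A : F} : A ∈ Ax → Graft Ax subs (.leaf A) (.leaf A)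
  | leafAssm {A : F} {t : DTree F} :
      t ∈ subs → DTree.concl t = A → Graft Ax subs (.leaf A) t
  | node {b : Bool} {i : Inst F} {ts ts' : List (DTree F)} :
      (hlen : ts.length = ts'.length) →
      (∀ (k : ℕ) (h : k < ts.length) (h' : k < ts'.length),
        Graft Ax subs (ts.get ⟨k, h⟩) (ts'.get ⟨k, h'⟩)) →
      Graft Ax subs (.node b i ts) (.node b i ts')

/-- The one-step mimicking rewrite relation on derivation trees of `S + r`:
a subtree ending in an application of an instance `(⟨A₁,…,Aₙ⟩, A)` of `r` with
immediate subderivations `D₁,…,Dₙ` is replaced by a derivation tree of `S` with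
conclusion `A` and assumptions among `{A₁,…,Aₙ}`, onto whose assumption leaves
the `Dᵢ` are grafted. -/
inductive Step {F : Type u} (S : APHS F) (r : Rule F) : DTree F → DTree F → Prop
  | root {i : Inst F} {subs : List (DTree F)} {D' E : DTree F} :
      i ∈ r → subs.map DTree.concl = i.1 →
      ExtDeriv S r D' → RFree D' → D'.concl = i.2 →
      (∀ A : F, DTree.IsAssm S.axioms A D' → A ∈ i.1) →
      Graft S.axioms subs D' E →
      Step S r (.node true i subs) E
  | congr {b : Bool} {i : Inst F} {pre post : List (DTree F)} {t t' : DTree F} :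
      Step S r t t' →
      Step S r (.node b i (pre ++ t :: post)) (.node b i (pre ++ t' :: post))


section Aux

variable {F : Type u}

/-- One-step relation on lists: exactly one element steps. -/
inductive LS (S : APHS F) (r : Rule F) : List (DTree F) → List (DTree F) → Prop
  | head {t t' : DTree F} {l : List (DTree F)} :
      Step S r t t' → LS S r (t :: l) (t' :: l)
  | tail {t : DTree F} {l l' : List (DTree F)} :
      LS S r l l' → LS S r (t :: l) (t :: l')

variable {S : APHS F} {r : Rule F}

lemma acc_leaf (A : F) : Acc (fun x y => Step S r y x) (DTree.leaf A) :=
  Acc.intro _ (fun _ h => by cases h)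

lemma ls_append {t t' : DTree F} (h : Step S r t t') :
    ∀ (pre post : List (DTree F)), LS S r (pre ++ t :: post) (pre ++ t' :: post)
  | [], _ => LS.head h
  | a :: pre, post => LS.tail (ls_append h pre post)

lemma acc_cons {t : DTree F} (ht : Acc (fun x y => Step S r y x) t) :
    ∀ {l : List (DTree F)}, Acc (fun x y => LS S r y x) l →
      Acc (fun x y => LS S r y x) (t :: l) := by
  induction ht with
  | intro t _ iht =>
    intro l hl
    induction hl with
    | intro l hacc ihl =>
      constructor
      intro l' h
      cases h with
      | head hs => exact iht _ hs (Acc.intro l hacc)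
      | tail hs => exact ihl _ hs

lemma acc_ls : ∀ {l : List (DTree F)},
    (∀ t ∈ l, Acc (fun x y => Step S r y x) t) → Acc (fun x y => LS S r y x) l
  | [], _ => Acc.intro _ (fun _ h => by cases h)
  | t :: l, h =>
      acc_cons (h t (by simp))
        (acc_ls (fun s hs => h s (by simp [hs])))

lemma mem_of_ls {l l' : List (DTree F)} (h : LS S r l l') :
    (∀ t ∈ l, Acc (fun x y => Step S r y x) t) →
    ∀ t ∈ l', Acc (fun x y => Step S r y x) t := by
  induction h with
  | head hs =>
    intro hall t ht
    rcases List.mem_cons.1 ht with rfl | ht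
    · exact (hall _ (by simp)).inv hs
    · exact hall t (by simp [ht])
  | tail hs ih =>
    intro hall t ht
    rcases List.mem_cons.1 ht with rfl | ht
    · exact hall t (by simp)
    · exact ih (fun s hsm => hall s (by simp [hsm])) t ht

lemma acc_node_false {l : List (DTree F)}
    (hall : ∀ t ∈ l, Acc (fun x y => Step S r y x) t) (i : Inst F) :
    Acc (fun x y => Step S r y x) (DTree.node false i l) := by
  have hls := acc_ls (S := S) (r := r) hall
  clear hall
  induction hls with
  | intro l hacc ihl =>
    constructor
    intro E hE
    cases hE with
    | congr hs => exact ihl _ (ls_append hs _ _)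

lemma graft_acc : ∀ {subs : List (DTree F)} {D' E : DTree F},
    Graft S.axioms subs D' E → RFree D' →
    (∀ t ∈ subs, Acc (fun x y => Step S r y x) t) →
    Acc (fun x y => Step S r y x) E := by
  intro subs D' E hg
  induction hg with
  | leafAx hA => exact fun _ _ => acc_leaf _
  | leafAssm ht hc => exact fun _ hall => hall _ ht
  | node hlen hnode ih =>
    intro hRF hall
    cases hRF with
    | node hsub =>
      apply acc_node_false
      intro t ht
      obtain ⟨⟨k, hk⟩, rfl⟩ := List.mem_iff_get.1 ht
      exact ih k (by omega) hk (hsub _ (List.get_mem _ _)) hall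

lemma acc_node_true (i : Inst F) :
    ∀ {l : List (DTree F)}, (∀ t ∈ l, Acc (fun x y => Step S r y x) t) →
      Acc (fun x y => Step S r y x) (DTree.node true i l) := by
  intro l hall
  have hls := acc_ls (S := S) (r := r) hall
  induction hls with
  | intro l hacc ihl =>
    constructor
    intro E hE
    cases hE with
    | root hi hmap hExt hRF hconcl hassm hGr => exact graft_acc hGr hRF hall
    | congr hs =>
      exact ihl _ (ls_append hs _ _) (mem_of_ls (ls_append hs _ _) hall)

lemma acc_all : ∀ D : DTree F, Acc (fun x y => Step S r y x) D := by
  suffices h : ∀ n (D : DTree F), sizeOf D = n → Acc (fun x y => Step S r y x) D from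
    fun D => h _ D rfl
  intro n
  induction n using Nat.strong_induction_on with
  | _ n ih =>
    intro D hn
    subst hn
    cases D with
    | leaf A => exact acc_leaf A
    | node b i l =>
      have hall : ∀ t ∈ l, Acc (fun x y => Step S r y x) t := by
        intro t ht
        refine ih (sizeOf t) ?_ t rfl
        have := List.sizeOf_lt_of_mem ht
        simp only [DTree.node.sizeOf_spec]
        omega
      cases b with
      | false => exact acc_node_false hall i
      | true => exact acc_node_true i hall

/-- choice over a list -/
lemma choose_list {α β : Type*} (P : α → β → Prop) :
    ∀ l : List α, (∀ a ∈ l, ∃ b, P a b) →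
      ∃ bs : List β, bs.length = l.length ∧
        ∀ (k : ℕ) (h : k < l.length) (h' : k < bs.length),
          P (l.get ⟨k, h⟩) (bs.get ⟨k, h'⟩) := by
  intro l
  induction l with
  | nil => exact fun _ => ⟨[], rfl, fun k h _ => absurd h (by simp)⟩
  | cons a l ih =>
    intro h
    obtain ⟨b, hb⟩ := h a (by simp)
    obtain ⟨bs, hlen, hbs⟩ := ih (fun x hx => h x (by simp [hx]))
    refine ⟨b :: bs, by simp [hlen], ?_⟩
    intro k hk hk'
    cases k with
    | zero => exact hb
    | succ k => exact hbs k (by simpa using hk) (by simpa using hk')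

lemma deriv_to_tree {Γ : Set F} {A : F} (h : S.Deriv Γ A) :
    ∃ D : DTree F, ExtDeriv S r D ∧ RFree D ∧ D.concl = A ∧
      ∀ B : F, DTree.IsAssm S.axioms B D → B ∈ Γ := by
  induction h with
  | assum hA =>
    refine ⟨.leaf _, ExtDeriv.leaf _, RFree.leaf _, rfl, ?_⟩
    intro B hB
    cases hB with
    | leaf _ => exact hA
  | ax hA =>
    refine ⟨.leaf _, ExtDeriv.leaf _, RFree.leaf _, rfl, ?_⟩
    intro B hB
    cases hB with
    | leaf hn => exact absurd hA hn
  | @rule q i hq hi hprem ih =>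
    obtain ⟨subs, hlen, hsubs⟩ := choose_list
      (fun B D => ExtDeriv S r D ∧ RFree D ∧ DTree.concl D = B ∧
        ∀ C : F, DTree.IsAssm S.axioms C D → C ∈ Γ) i.1 ih
    have hmem : ∀ t ∈ subs, ExtDeriv S r t ∧ RFree t ∧
        ∀ C : F, DTree.IsAssm S.axioms C t → C ∈ Γ := by
      intro t ht
      obtain ⟨⟨k, hk⟩, rfl⟩ := List.mem_iff_get.1 ht
      obtain ⟨h1, h2, _, h4⟩ := hsubs k (by omega) hk
      exact ⟨h1, h2, h4⟩
    have hmap : subs.map DTree.concl = i.1 := by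
      apply List.ext_get (by simp [hlen])
      intro k h1 h2
      simp only [List.get_eq_getElem, List.getElem_map]
      exact (hsubs k h2 (by simpa using h1)).2.2.1
    refine ⟨.node false i subs, ExtDeriv.nodeS hq hi hmap (fun t ht => (hmem t ht).1),
      RFree.node (fun t ht => (hmem t ht).2.1), rfl, ?_⟩
    intro B hB
    cases hB with
    | node ht hassm => exact (hmem _ ht).2.2 B hassm

lemma graft_exists (Ax : Set F) (subs : List (DTree F)) :
    ∀ D' : DTree F, (∀ A : F, DTree.IsAssm Ax A D' → ∃ t ∈ subs, DTree.concl t = A) →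
      ∃ E, Graft Ax subs D' E := by
  suffices h : ∀ n (D' : DTree F), sizeOf D' = n →
      (∀ A : F, DTree.IsAssm Ax A D' → ∃ t ∈ subs, DTree.concl t = A) →
      ∃ E, Graft Ax subs D' E from fun D' => h _ D' rfl
  intro n
  induction n using Nat.strong_induction_on with
  | _ n ihn =>
    intro D' hn
    subst hn
    cases D' with
    | leaf A =>
      intro h
      by_cases hA : A ∈ Ax
      · exact ⟨.leaf A, Graft.leafAx hA⟩
      · obtain ⟨t, ht, hc⟩ := h A (DTree.IsAssm.leaf hA)
        exact ⟨t, Graft.leafAssm ht hc⟩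
    | node b i ts =>
      intro h
      have : ∀ t ∈ ts, ∃ E, Graft Ax subs t E := by
        intro t ht
        refine ihn (sizeOf t) ?_ t rfl ?_
        · have := List.sizeOf_lt_of_mem ht
          simp only [DTree.node.sizeOf_spec]
          omega
        · exact fun A hA => h A (DTree.IsAssm.node ht hA)
      obtain ⟨ts', hlen, hts'⟩ := choose_list (fun t E => Graft Ax subs t E) ts this
      exact ⟨.node b i ts', Graft.node hlen.symm (fun k hk hk' => hts' k hk hk')⟩

end Aux

/-- the one-step mimicking rewrite relation on derivation trees of
`S + r` is strongly normalising (its converse is well-founded), and if `r` is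
derivable in `S`, then every normal form is a derivation tree containing no
application of `r`, i.e. a derivation tree of `S`. -/
theorem mimicking_SN_and_normal_forms_are_S_derivations
    {F : Type u} [Nonempty F] (S : APHS F) (r : Rule F) :
    WellFounded (fun D' D : {D : DTree F // ExtDeriv S r D} =>
        Step S r D.1 D'.1) ∧
    (S.Derivable r →
      ∀ D : DTree F, ExtDeriv S r D → (∀ D' : DTree F, ¬ Step S r D D') →
        RFree D) := by
  constructor
  · exact InvImage.wf (r := fun x y => Step S r y x)
      (fun D : {D : DTree F // ExtDeriv S r D} => D.1) ⟨fun D => acc_all D⟩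
  · intro hder D hD hnf
    induction hD with
    | leaf A => exact RFree.leaf A
    | nodeS hq hi hmap hsubs ih =>
      refine RFree.node ?_
      intro t ht
      obtain ⟨pre, post, rfl⟩ := List.append_of_mem ht
      refine ih t ht ?_
      intro t' hstep
      exact hnf _ (Step.congr hstep)
    | @nodeR i subs hi hmap hsubs ih =>
      exfalso
      obtain ⟨D', hExt, hRF, hconcl, hassm⟩ := deriv_to_tree (r := r) (hder i hi)
      have hassm' : ∀ A : F, DTree.IsAssm S.axioms A D' → A ∈ i.1 := fun A hA => hassm A hA
      obtain ⟨E, hE⟩ := graft_exists S.axioms subs D' (by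
        intro A hA
        have : A ∈ i.1 := hassm A hA
        rw [← hmap] at this
        obtain ⟨t, ht, hconclt⟩ := List.mem_map.1 this
        exact ⟨t, ht, hconclt⟩)
      exact hnf E (Step.root hi hmap hExt hRF hconcl hassm' hE)
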